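/- Let a, b, c, d, g be complex numbers with d and g not nonpositive integers, and let x, y be complex numbers with |x| + |y| < 1. Then the Appell F₂ double series satisfies ∑_{m=0}^∞ ∑_{n=0}^∞ [(a)_{m+n} (b)_m (c)_n / ((d)_m (g)_n m! n!)] x^m y^n = ∑_{n=0}^∞ [(a)_n (c)_n / ((g)_n n!)] y^n · ∑_{m=0}^∞ [(a+n)_m (b)_m / ((d)_m m!)] x^m, where all series converge absolutely. -/

import Mathlib

/-- Pochhammer symbol `(q)_n = q (q+1) ⋯ (q+n-1)` for a complex number `q`. -/
noncomputable def cpoch (q : ℂ) (n : ℕ) : ℂ := ∏ i ∈ Finset.range n, (q + i)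

open Finset
local notation "cabs" => (norm : ℂ → ℝ)
lemma cpoch_abs (q : ℂ) (n : ℕ) :
    cabs (cpoch q n) = ∏ i ∈ Finset.range n, cabs (q + i) :=
  norm_prod _ _

lemma cpoch_add (q : ℂ) (n m : ℕ) :
    cpoch q (n + m) = cpoch q n * cpoch (q + n) m := by
  simp only [cpoch, Finset.prod_range_add]
  congr 1
  refine Finset.prod_congr rfl fun i _ => ?_
  push_cast; ring

lemma cpoch_one_nat (m : ℕ) : cpoch 1 m = (m.factorial : ℂ) := by
  induction m with
  | zero => simp [cpoch]
  | succ m ih =>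
    simp only [cpoch, Finset.prod_range_succ] at *
    rw [ih, Nat.factorial_succ]
    push_cast; ring

lemma prod_ratio_le (ρ : ℝ) (hρ : 1 ≤ ρ) (φ : ℕ → ℝ) (hφ : ∀ i, 0 ≤ φ i)
    (N : ℕ) (hN : ∀ i, N ≤ i → φ i ≤ ρ) :
    ∃ C : ℝ, 0 < C ∧ ∀ m, ∏ i ∈ Finset.range m, φ i ≤ C * ρ ^ m := by
  refine ⟨∏ i ∈ Finset.range N, max (φ i) 1,
    Finset.prod_pos (fun i _ => lt_of_lt_of_le one_pos (le_max_right _ _)), fun m => ?_⟩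
  have hC1 : (1:ℝ) ≤ ∏ i ∈ Finset.range N, max (φ i) 1 := by
    calc (1:ℝ) = ∏ _i ∈ Finset.range N, (1:ℝ) := by simp
      _ ≤ _ := Finset.prod_le_prod (fun i _ => zero_le_one) (fun i _ => le_max_right _ _)
  rcases le_or_gt m N with h | h
  · calc ∏ i ∈ range m, φ i ≤ ∏ i ∈ range m, max (φ i) 1 :=
        Finset.prod_le_prod (fun i _ => hφ i) (fun i _ => le_max_left _ _)
      _ ≤ ∏ i ∈ range N, max (φ i) 1 := by
        obtain ⟨j, rfl⟩ : ∃ j, N = m + j := ⟨N - m, by omega⟩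
        rw [Finset.prod_range_add]
        refine le_mul_of_one_le_right
          (Finset.prod_nonneg fun i _ => le_trans zero_le_one (le_max_right _ _)) ?_
        calc (1:ℝ) = ∏ _i ∈ Finset.range j, (1:ℝ) := by simp
          _ ≤ _ := Finset.prod_le_prod (fun i _ => zero_le_one) (fun i _ => le_max_right _ _)
      _ ≤ _ := le_mul_of_one_le_right (le_trans zero_le_one hC1) (one_le_pow₀ hρ)
  · obtain ⟨j, rfl⟩ : ∃ j, m = N + j := ⟨m - N, by omega⟩
    rw [Finset.prod_range_add]
    have h1 : ∏ i ∈ range N, φ i ≤ ∏ i ∈ Finset.range N, max (φ i) 1 :=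
      Finset.prod_le_prod (fun i _ => hφ i) (fun i _ => le_max_left _ _)
    have h2 : ∏ i ∈ range j, φ (N + i) ≤ ρ ^ j := by
      calc ∏ i ∈ range j, φ (N + i) ≤ ∏ i ∈ range j, ρ :=
          Finset.prod_le_prod (fun i _ => hφ _) (fun i _ => hN _ (Nat.le_add_right _ _))
        _ = ρ ^ j := by rw [Finset.prod_const, Finset.card_range]
      
    calc (∏ i ∈ range N, φ i) * ∏ i ∈ range j, φ (N + i)
        ≤ (∏ i ∈ Finset.range N, max (φ i) 1) * ρ ^ j := by
          apply mul_le_mul h1 h2 (Finset.prod_nonneg (fun i _ => hφ _)) (le_trans zero_le_one hC1)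
      _ ≤ (∏ i ∈ Finset.range N, max (φ i) 1) * ρ ^ (N + j) := by
          apply mul_le_mul_of_nonneg_left (pow_le_pow_right₀ hρ (Nat.le_add_left _ _))
            (le_trans zero_le_one hC1)

/-- Key ratio bound: `|(p)_m| ≤ C (1+ε)^m |(q)_m|` when `q` avoids `-ℕ`. -/
lemma poch_le (p q : ℂ) (hq : ∀ i : ℕ, q + (i : ℂ) ≠ 0) {ε : ℝ} (hε : 0 < ε) :
    ∃ C : ℝ, 0 < C ∧ ∀ m : ℕ,
      cabs (cpoch p m) ≤ C * (1 + ε) ^ m * cabs (cpoch q m) := by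
  set φ : ℕ → ℝ := fun i => cabs (p + i) / cabs (q + i) with hφdef
  have hqpos : ∀ i : ℕ, 0 < cabs (q + i) := fun i =>
    norm_pos_iff.mpr (hq i)
  have hφ : ∀ i, 0 ≤ φ i := fun i => div_nonneg (norm_nonneg _) (norm_nonneg _)
  obtain ⟨N, hNge⟩ := exists_nat_ge (max ((cabs p + (1 + ε) * cabs q + 1) / ε)
    (cabs q + 1))
  have hNbig : ∀ i : ℕ, N ≤ i → φ i ≤ 1 + ε := by
    intro i hi
    have hcast : (N : ℝ) ≤ (i : ℝ) := by exact_mod_cast hi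
    have hi1 : (cabs p + (1 + ε) * cabs q + 1) / ε ≤ (i : ℝ) :=
      le_trans (le_trans (le_max_left _ _) hNge) hcast
    have hi2 : cabs q + 1 ≤ (i : ℝ) :=
      le_trans (le_trans (le_max_right _ _) hNge) hcast
    have hlow : (i : ℝ) - cabs q ≤ cabs (q + i) := by
      have h0 : (q + (i:ℂ)) + (-q) = ((i:ℂ)) := by ring
      have h := norm_add_le (q + (i:ℂ)) (-q)
      rw [h0, norm_neg, Complex.norm_natCast] at h
      linarith
    have hup : cabs (p + i) ≤ cabs p + i := by
      calc cabs (p + i) ≤ cabs p + cabs (i : ℂ) := norm_add_le _ _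
        _ = cabs p + i := by rw [Complex.norm_natCast]
    have hpos2 : (0 : ℝ) < (i : ℝ) - cabs q := by linarith
    rw [hφdef, div_le_iff₀ (hqpos i)]
    have hεi : cabs p + (1 + ε) * cabs q + 1 ≤ ε * i := by
      rw [div_le_iff₀ hε] at hi1; linarith
    nlinarith [hqpos i, norm_nonneg p]
  obtain ⟨C, hC, hCle⟩ := prod_ratio_le (1 + ε) (by linarith) φ hφ N hNbig
  refine ⟨C, hC, fun m => ?_⟩
  have hprod : ∏ i ∈ range m, φ i =
      cabs (cpoch p m) / cabs (cpoch q m) := by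
    rw [cpoch_abs, cpoch_abs, hφdef, ← Finset.prod_div_distrib]
  have hqm : 0 < cabs (cpoch q m) := by
    rw [cpoch_abs]; exact Finset.prod_pos (fun i _ => hqpos i)
  have := hCle m
  rw [hprod, div_le_iff₀ hqm] at this
  linarith

lemma summable_choose_mul (u v : ℝ) (hu : 0 ≤ u) (hv : 0 ≤ v) (huv : u + v < 1) :
    Summable (fun mn : ℕ × ℕ => ((mn.1 + mn.2).choose mn.1 : ℝ) * u ^ mn.1 * v ^ mn.2) := by
  rw [← Finset.HasAntidiagonal.sigmaAntidiagonalEquivProd.summable_iff]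
  have hnn : ∀ x : (Σ k : ℕ, Finset.HasAntidiagonal.antidiagonal k),
      0 ≤ (((x.2 : ℕ × ℕ).1 + (x.2 : ℕ × ℕ).2).choose (x.2 : ℕ × ℕ).1 : ℝ)
        * u ^ (x.2 : ℕ × ℕ).1 * v ^ (x.2 : ℕ × ℕ).2 := by
    intro x; positivity
  apply (summable_sigma_of_nonneg hnn).2
  constructor
  · intro k
    exact (hasSum_fintype _).summable
  · apply Summable.congr (f := fun k : ℕ => (u + v) ^ k)
    · exact summable_geometric_of_lt_one (by positivity) huv
    · intro k
      rw [Finset.tsum_subtype (Finset.HasAntidiagonal.antidiagonal k)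
        (fun p => ((p.1 + p.2).choose p.1 : ℝ) * u ^ p.1 * v ^ p.2)]
      rw [Finset.Nat.sum_antidiagonal_eq_sum_range_succ_mk]
      rw [add_pow]
      refine Finset.sum_congr rfl fun i hi => ?_
      rw [Finset.mem_range] at hi
      have : i + (k - i) = k := by omega
      rw [this]; ring


set_option maxHeartbeats 1000000 in
/-- For complex `a, b, c, d, g` with `d, g` not nonpositive integers and
`|x| + |y| < 1`, the Appell `F₂` double series converges absolutely, as do all the series
on the right, and
`∑_{m,n} (a)_{m+n} (b)_m (c)_n / ((d)_m (g)_n m! n!) x^m y^n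
 = ∑_n (a)_n (c)_n / ((g)_n n!) y^n · ∑_m (a+n)_m (b)_m / ((d)_m m!) x^m`. -/
theorem statement6 (a b c d g x y : ℂ)
    (hd : ∀ n : ℕ, d ≠ -(n : ℂ)) (hg : ∀ n : ℕ, g ≠ -(n : ℂ))
    (hxy : ‖x‖ + ‖y‖ < 1) :
    Summable (fun mn : ℕ × ℕ =>
      cpoch a (mn.1 + mn.2) * cpoch b mn.1 * cpoch c mn.2 /
        (cpoch d mn.1 * cpoch g mn.2 * (mn.1.factorial : ℂ) * (mn.2.factorial : ℂ)) *
        x ^ mn.1 * y ^ mn.2) ∧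
    (∀ n : ℕ, Summable (fun m : ℕ =>
      cpoch (a + n) m * cpoch b m / (cpoch d m * (m.factorial : ℂ)) * x ^ m)) ∧
    Summable (fun n : ℕ =>
      cpoch a n * cpoch c n / (cpoch g n * (n.factorial : ℂ)) * y ^ n *
        ∑' m : ℕ, cpoch (a + n) m * cpoch b m / (cpoch d m * (m.factorial : ℂ)) * x ^ m) ∧
    (∑' mn : ℕ × ℕ,
        cpoch a (mn.1 + mn.2) * cpoch b mn.1 * cpoch c mn.2 /
          (cpoch d mn.1 * cpoch g mn.2 * (mn.1.factorial : ℂ) * (mn.2.factorial : ℂ)) *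
          x ^ mn.1 * y ^ mn.2)
      = ∑' n : ℕ, cpoch a n * cpoch c n / (cpoch g n * (n.factorial : ℂ)) * y ^ n *
          ∑' m : ℕ, cpoch (a + n) m * cpoch b m / (cpoch d m * (m.factorial : ℂ)) * x ^ m := by
  have hx0 := norm_nonneg x
  have hy0 := norm_nonneg y
  have hd' : ∀ i : ℕ, d + (i : ℂ) ≠ 0 := fun i h => hd i (by
    rw [eq_neg_iff_add_eq_zero]; exact h)
  have hg' : ∀ i : ℕ, g + (i : ℂ) ≠ 0 := fun i h => hg i (by
    rw [eq_neg_iff_add_eq_zero]; exact h)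
  have h1' : ∀ i : ℕ, (1 : ℂ) + (i : ℂ) ≠ 0 := fun i => by
    rw [add_comm]; exact Nat.cast_add_one_ne_zero i
  obtain ⟨ρ, hρ1, hρs, hple⟩ : ∃ ρ : ℝ, 1 ≤ ρ ∧
      ρ ^ 2 * (cabs x + cabs y) < 1 ∧
      ∀ p q : ℂ, (∀ i : ℕ, q + (i : ℂ) ≠ 0) → ∃ C : ℝ, 0 < C ∧ ∀ m : ℕ,
        cabs (cpoch p m) ≤ C * ρ ^ m * cabs (cpoch q m) := by
    have hε : (0:ℝ) < (1 - (cabs x + cabs y)) / 4 := by linarith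
    refine ⟨1 + (1 - (cabs x + cabs y)) / 4, by linarith, by
      nlinarith [sq_nonneg (1 - (cabs x + cabs y)),
        mul_nonneg (add_nonneg hx0 hy0) (sq_nonneg (1 - (cabs x + cabs y)))], ?_⟩
    intro p q hq
    exact poch_le p q hq hε
  have hρ0 : (0:ℝ) < ρ := lt_of_lt_of_le one_pos hρ1
  obtain ⟨C1, hC1, hA1⟩ := hple a 1 h1'
  obtain ⟨C2, hC2, hB2⟩ := hple b d hd'
  obtain ⟨C3, hC3, hC3'⟩ := hple c g hg'
  have hdpos : ∀ m : ℕ, 0 < cabs (cpoch d m) := fun m => by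
    rw [cpoch_abs]; exact Finset.prod_pos fun i _ => norm_pos_iff.mpr (hd' i)
  have hgpos : ∀ m : ℕ, 0 < cabs (cpoch g m) := fun m => by
    rw [cpoch_abs]; exact Finset.prod_pos fun i _ => norm_pos_iff.mpr (hg' i)
  have hA1' : ∀ k : ℕ, cabs (cpoch a k) ≤ C1 * ρ ^ k * (k.factorial : ℝ) := by
    intro k; have := hA1 k
    rwa [cpoch_one_nat, Complex.norm_natCast] at this
  set F : ℕ × ℕ → ℂ := fun mn =>
      cpoch a (mn.1 + mn.2) * cpoch b mn.1 * cpoch c mn.2 /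
        (cpoch d mn.1 * cpoch g mn.2 * (mn.1.factorial : ℂ) * (mn.2.factorial : ℂ)) *
        x ^ mn.1 * y ^ mn.2 with hF
  -- main bound
  have hkey : ∀ mn : ℕ × ℕ, ‖F mn‖ ≤
      (C1 * C2 * C3) * (((mn.1 + mn.2).choose mn.1 : ℝ)
        * (ρ ^ 2 * cabs x) ^ mn.1 * (ρ ^ 2 * cabs y) ^ mn.2) := by
    rintro ⟨m, n⟩
    have hfac : ((m + n).factorial : ℝ)
        = ((m + n).choose m : ℝ) * (m.factorial : ℝ) * (n.factorial : ℝ) := by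
      have h := Nat.choose_mul_factorial_mul_factorial (Nat.le_add_right m n)
      rw [Nat.add_sub_cancel_left] at h
      exact_mod_cast h.symm
    have hmf : (0:ℝ) < (m.factorial : ℝ) := by exact_mod_cast Nat.factorial_pos m
    have hnf : (0:ℝ) < (n.factorial : ℝ) := by exact_mod_cast Nat.factorial_pos n
    have hch : (0:ℝ) < ((m + n).choose m : ℝ) := by
      exact_mod_cast Nat.choose_pos (Nat.le_add_right m n)
    have habs : ‖F (m, n)‖ = ((m + n).choose m : ℝ)
        * (cabs (cpoch a (m + n)) / ((m + n).factorial : ℝ))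
        * (cabs (cpoch b m) / cabs (cpoch d m))
        * (cabs (cpoch c n) / cabs (cpoch g n))
        * cabs x ^ m * cabs y ^ n := by
      rw [hF]
      simp only [norm_mul, norm_div, norm_pow, Complex.norm_natCast]
      rw [hfac]
      field_simp [hch.ne', hmf.ne', hnf.ne', (hdpos m).ne', (hgpos n).ne']
    rw [habs]
    have e1 : cabs (cpoch a (m + n)) / ((m + n).factorial : ℝ) ≤ C1 * ρ ^ (m + n) := by
      rw [div_le_iff₀ (by exact_mod_cast Nat.factorial_pos (m + n))]
      exact hA1' (m + n)
    have e2 : cabs (cpoch b m) / cabs (cpoch d m) ≤ C2 * ρ ^ m := by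
      rw [div_le_iff₀ (hdpos m)]; exact hB2 m
    have e3 : cabs (cpoch c n) / cabs (cpoch g n) ≤ C3 * ρ ^ n := by
      rw [div_le_iff₀ (hgpos n)]; exact hC3' n
    calc ((m + n).choose m : ℝ)
        * (cabs (cpoch a (m + n)) / ((m + n).factorial : ℝ))
        * (cabs (cpoch b m) / cabs (cpoch d m))
        * (cabs (cpoch c n) / cabs (cpoch g n))
        * cabs x ^ m * cabs y ^ n
        ≤ ((m + n).choose m : ℝ) * (C1 * ρ ^ (m + n)) * (C2 * ρ ^ m) * (C3 * ρ ^ n)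
          * cabs x ^ m * cabs y ^ n := by
          refine mul_le_mul_of_nonneg_right (mul_le_mul_of_nonneg_right ?_ (by positivity))
            (by positivity)
          refine mul_le_mul (mul_le_mul (mul_le_mul_of_nonneg_left e1 hch.le) e2
            (by positivity) (by positivity)) e3 (by positivity) (by positivity)
      _ = (C1 * C2 * C3) * (((m + n).choose m : ℝ)
          * (ρ ^ 2 * cabs x) ^ m * (ρ ^ 2 * cabs y) ^ n) := by
          rw [pow_add]; ring
  have huv : ρ ^ 2 * cabs x + ρ ^ 2 * cabs y < 1 := by
    calc ρ ^ 2 * cabs x + ρ ^ 2 * cabs y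
        = ρ ^ 2 * (cabs x + cabs y) := by ring
      _ < 1 := hρs
  have hu : (0:ℝ) ≤ ρ ^ 2 * cabs x := by positivity
  have hv : (0:ℝ) ≤ ρ ^ 2 * cabs y := by positivity
  have S1 : Summable F :=
    Summable.of_norm_bounded ((summable_choose_mul _ _ hu hv huv).mul_left
      (C1 * C2 * C3)) hkey
  -- inner summability
  have S2 : ∀ n : ℕ, Summable (fun m : ℕ =>
      cpoch (a + n) m * cpoch b m / (cpoch d m * (m.factorial : ℂ)) * x ^ m) := by
    intro n
    obtain ⟨C4, hC4, hA4⟩ := hple (a + n) 1 h1'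
    have hA4' : ∀ k : ℕ, cabs (cpoch (a + n) k) ≤ C4 * ρ ^ k * (k.factorial : ℝ) := by
      intro k; have := hA4 k
      rwa [cpoch_one_nat, Complex.norm_natCast] at this
    have hx1 : ρ ^ 2 * cabs x < 1 := by nlinarith
    apply Summable.of_norm_bounded
      (g := fun m : ℕ => (C4 * C2) * (ρ ^ 2 * cabs x) ^ m)
      ((summable_geometric_of_lt_one hu hx1).mul_left _)
    intro m
    have hmf : (0:ℝ) < (m.factorial : ℝ) := by exact_mod_cast Nat.factorial_pos m
    have habs : ‖cpoch (a + n) m * cpoch b m / (cpoch d m * (m.factorial : ℂ)) * x ^ m‖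
        = (cabs (cpoch (a + n) m) / (m.factorial : ℝ))
        * (cabs (cpoch b m) / cabs (cpoch d m)) * cabs x ^ m := by
      simp only [norm_mul, norm_div, norm_pow, Complex.norm_natCast]
      field_simp
    rw [habs]
    have e1 : cabs (cpoch (a + n) m) / (m.factorial : ℝ) ≤ C4 * ρ ^ m := by
      rw [div_le_iff₀ hmf]; exact hA4' m
    have e2 : cabs (cpoch b m) / cabs (cpoch d m) ≤ C2 * ρ ^ m := by
      rw [div_le_iff₀ (hdpos m)]; exact hB2 m
    calc (cabs (cpoch (a + n) m) / (m.factorial : ℝ))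
        * (cabs (cpoch b m) / cabs (cpoch d m)) * cabs x ^ m
        ≤ (C4 * ρ ^ m) * (C2 * ρ ^ m) * cabs x ^ m := by
          refine mul_le_mul_of_nonneg_right ?_ (by positivity)
          exact mul_le_mul e1 e2 (by positivity) (by positivity)
      _ = (C4 * C2) * (ρ ^ 2 * cabs x) ^ m := by ring
  -- factorization
  have hfact : ∀ n m : ℕ, F (m, n)
      = (cpoch a n * cpoch c n / (cpoch g n * (n.factorial : ℂ)) * y ^ n)
        * (cpoch (a + n) m * cpoch b m / (cpoch d m * (m.factorial : ℂ)) * x ^ m) := by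
    intro n m
    rw [hF]
    simp only
    rw [show m + n = n + m from add_comm m n, cpoch_add a n m]
    ring
  have hG : Summable (fun p : ℕ × ℕ => F p.swap) := S1.prod_symm
  have h3 : ∀ n : ℕ,
      (cpoch a n * cpoch c n / (cpoch g n * (n.factorial : ℂ)) * y ^ n)
        * (∑' m : ℕ, cpoch (a + n) m * cpoch b m / (cpoch d m * (m.factorial : ℂ)) * x ^ m)
      = ∑' m : ℕ, F (m, n) := by
    intro n
    rw [← tsum_mul_left]
    exact tsum_congr fun m => (hfact n m).symm
  have S3 : Summable (fun n : ℕ =>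
      cpoch a n * cpoch c n / (cpoch g n * (n.factorial : ℂ)) * y ^ n *
        ∑' m : ℕ, cpoch (a + n) m * cpoch b m / (cpoch d m * (m.factorial : ℂ)) * x ^ m) := by
    apply (hG.prod).congr
    intro n
    exact (h3 n).symm
  refine ⟨S1, S2, S3, ?_⟩
  calc ∑' mn : ℕ × ℕ, F mn
      = ∑' p : ℕ × ℕ, F p.swap := by
        rw [← (Equiv.prodComm ℕ ℕ).tsum_eq (fun p : ℕ × ℕ => F p.swap)]
        exact tsum_congr fun mn => rfl
    _ = ∑' (n : ℕ) (m : ℕ), F (n, m).swap := Summable.tsum_prod hG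
    _ = ∑' n : ℕ, cpoch a n * cpoch c n / (cpoch g n * (n.factorial : ℂ)) * y ^ n *
          ∑' m : ℕ, cpoch (a + n) m * cpoch b m / (cpoch d m * (m.factorial : ℂ)) * x ^ m :=
        tsum_congr fun n => (h3 n).symm
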